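/- Fix n ∈ ℕ, an adjacency parameter A ∈ ℕ with A ≥ 1, and a privacy parameter ε ≥ 0, and let p = 1/(1 + exp(−ε/A)). The modified Erdős–Rényi model is ε-differentially private: for all graphs G, G' on n nodes with d_Δ(E(G), E(G')) ≤ A and every candidate output graph H on n nodes, p^{N − d(G,H)} · (1 − p)^{d(G,H)} ≤ exp(ε) · p^{N − d(G',H)} · (1 − p)^{d(G',H)}, where N = C(n,2), d(G,H) = d_Δ(E(G), E(H)), and d(G',H) = d_Δ(E(G'), E(H)). -/

import Mathlib

/-- The set `K_n` of all `C(n,2)` unordered pairs of distinct nodes of `Fin n`.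
A simple undirected graph on `n` nodes is identified with its edge set, a subset of `Kn n`. -/
def Kn (n : ℕ) : Finset (Sym2 (Fin n)) := Finset.univ.filter (fun e => ¬ e.IsDiag)

lemma Kn_card (n : ℕ) : (Kn n).card = n.choose 2 := by
  have := Sym2.card_subtype_not_diag (α := Fin n)
  rwa [Fintype.card_subtype, Fintype.card_fin] at this

/-- **The modified Erdős–Rényi model is `ε`-differentially private.**
Fix `n`, an adjacency parameter `A ≥ 1`, a privacy parameter `ε ≥ 0`, and let
`p = 1/(1 + exp(−ε/A))`. For all graphs `G, G'` on `n` nodes with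
`d_Δ(E(G), E(G')) ≤ A` and every candidate output graph `H`,
`p^(N−d(G,H))·(1−p)^(d(G,H)) ≤ exp(ε) · p^(N−d(G',H))·(1−p)^(d(G',H))`,
where `N = C(n,2)` and `d(G,H) = d_Δ(E(G), E(H))`. -/
theorem modified_ER_dp (n A : ℕ) (hA : 1 ≤ A) (ε : ℝ) (hε : 0 ≤ ε)
    (p : ℝ) (hp : p = 1 / (1 + Real.exp (-ε / A)))
    (G G' H : Finset (Sym2 (Fin n)))
    (hG : G ⊆ Kn n) (hG' : G' ⊆ Kn n) (hH : H ⊆ Kn n)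
    (hadj : (symmDiff G G').card ≤ A) :
    p ^ (n.choose 2 - (symmDiff G H).card) * (1 - p) ^ (symmDiff G H).card
      ≤ Real.exp ε *
        (p ^ (n.choose 2 - (symmDiff G' H).card) * (1 - p) ^ (symmDiff G' H).card) := by
  set N := n.choose 2
  set a := (symmDiff G H).card
  set b := (symmDiff G' H).card
  have hq : (0:ℝ) < Real.exp (-ε / A) := Real.exp_pos _
  have hden : (0:ℝ) < 1 + Real.exp (-ε / A) := by linarith
  have hp0 : 0 < p := by rw [hp]; positivity
  have h1p : 1 - p = p * Real.exp (-ε / A) := by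
    rw [hp]; field_simp; ring
  -- cardinality bounds
  have ha : a ≤ N := by
    have := Finset.card_le_card ((symmDiff_le_sup).trans (sup_le hG hH))
    rwa [Kn_card] at this
  have hb : b ≤ N := by
    have := Finset.card_le_card ((symmDiff_le_sup).trans (sup_le hG' hH))
    rwa [Kn_card] at this
  have htri : b ≤ a + A := by
    have h1 : symmDiff G' H ≤ symmDiff G' G ⊔ symmDiff G H := symmDiff_triangle G' G H
    have h2 : b ≤ (symmDiff G' G ∪ symmDiff G H).card := Finset.card_le_card h1
    rw [symmDiff_comm G' G] at h2
    have h3 := Finset.card_union_le (symmDiff G G') (symmDiff G H)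
    omega
  have key : ∀ k : ℕ, k ≤ N →
      p ^ (N - k) * (1 - p) ^ k = p ^ N * Real.exp (-ε / A) ^ k := by
    intro k hk
    rw [h1p, mul_pow, ← mul_assoc, ← pow_add, Nat.sub_add_cancel hk]
  rw [key a ha, key b hb]
  have hA0 : (0:ℝ) < A := by exact_mod_cast Nat.lt_of_lt_of_le Nat.zero_lt_one hA
  have hbA : (b:ℝ) ≤ (a:ℝ) + A := by exact_mod_cast htri
  have hexp : Real.exp (-ε / A) ^ a ≤ Real.exp ε * Real.exp (-ε / A) ^ b := by
    rw [← Real.exp_nat_mul, ← Real.exp_nat_mul, ← Real.exp_add, Real.exp_le_exp]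
    set t := ε / A with htdef
    have ht : 0 ≤ t := by positivity
    have htA : t * A = ε := div_mul_cancel₀ ε hA0.ne'
    have hfact : 0 ≤ t * ((a:ℝ) + A - b) := mul_nonneg ht (by linarith)
    have hneg : -ε / (A:ℝ) = -t := by rw [htdef, neg_div]
    rw [hneg]
    nlinarith [hfact]
  calc p ^ N * Real.exp (-ε / A) ^ a
      ≤ p ^ N * (Real.exp ε * Real.exp (-ε / A) ^ b) := by
        exact mul_le_mul_of_nonneg_left hexp (le_of_lt (pow_pos hp0 N))
    _ = Real.exp ε * (p ^ N * Real.exp (-ε / A) ^ b) := by ring
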